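/- Let 0 < r < R and 0 < δ < R/cosh R. Set λ = sinh r / sinh R and c = 1 − δ · cosh R / R. Then for all s, t ∈ [R − δ, R] and all θ ∈ [0, π], writing s' = r − λ(R − s) and t' = r − λ(R − t), one has c² λ² · (sinh²((s − t)/2) + sin²(θ/2) · sinh s · sinh t) ≤ sinh²((s' − t')/2) + sin²(θ/2) · sinh s' · sinh t' ≤ c⁻² λ² · (sinh²((s − t)/2) + sin²(θ/2) · sinh s · sinh t). -/

import Mathlib

open Real

/-- On `[0, y]`, the function `u ↦ u * cosh y - sinh u` is monotone. -/
lemma auxRC_mono (y : ℝ) : MonotoneOn (fun u : ℝ => u * Real.cosh y - Real.sinh u)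
    (Set.Icc 0 y) := by
  apply monotoneOn_of_deriv_nonneg (convex_Icc 0 y)
  · exact ((continuous_id.mul continuous_const).sub Real.continuous_sinh).continuousOn
  · intro u hu
    exact (((hasDerivAt_id u).mul_const (Real.cosh y)).sub (Real.hasDerivAt_sinh u)).differentiableAt.differentiableWithinAt
  · intro u hu
    rw [interior_Icc] at hu
    have hd : HasDerivAt (fun u : ℝ => u * Real.cosh y - Real.sinh u)
        (1 * Real.cosh y - Real.cosh u) u :=
      ((hasDerivAt_id u).mul_const (Real.cosh y)).sub (Real.hasDerivAt_sinh u)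
    rw [hd.deriv]
    have h1 : Real.cosh u ≤ Real.cosh y := by
      rw [Real.cosh_le_cosh]
      rw [abs_of_nonneg hu.1.le, abs_of_nonneg (hu.1.le.trans hu.2.le)]
      exact hu.2.le
    linarith

/-- Mean value type bound: `sinh y - sinh x ≤ (y - x) * cosh y` for `0 ≤ x ≤ y`. -/
lemma auxRC_sinh_sub_le {x y : ℝ} (hx : 0 ≤ x) (hxy : x ≤ y) :
    Real.sinh y - Real.sinh x ≤ (y - x) * Real.cosh y := by
  have := auxRC_mono y (Set.mem_Icc.mpr ⟨hx, hxy⟩)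
    (Set.mem_Icc.mpr ⟨hx.trans hxy, le_refl y⟩) hxy
  simp only at this
  nlinarith

/-- `sinh x ≤ x * cosh x` for `0 ≤ x`. -/
lemma auxRC_sinh_le_mul_cosh {x : ℝ} (hx : 0 ≤ x) : Real.sinh x ≤ x * Real.cosh x := by
  have := auxRC_sinh_sub_le (le_refl 0) hx
  simpa using this

/-- Concavity-type bound: `sinh (λ x) ≤ λ sinh x` for `λ ∈ [0,1]`, `x ≥ 0`. -/
lemma auxRC_sinh_mul_le {lam x : ℝ} (h0 : 0 ≤ lam) (h1 : lam ≤ 1) (hx : 0 ≤ x) :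
    Real.sinh (lam * x) ≤ lam * Real.sinh x := by
  have hsplit : x = lam * x + (1 - lam) * x := by ring
  have hb : 0 ≤ (1 - lam) * x := mul_nonneg (by linarith) hx
  have ha : 0 ≤ lam * x := mul_nonneg h0 hx
  have hadd : Real.sinh x = Real.sinh (lam * x) * Real.cosh ((1 - lam) * x)
      + Real.cosh (lam * x) * Real.sinh ((1 - lam) * x) := by
    nth_rewrite 1 [hsplit]
    exact Real.sinh_add _ _
  have h2 : (1 - lam) * x ≤ Real.sinh ((1 - lam) * x) := Real.self_le_sinh_iff.mpr hb
  have h3 : Real.sinh (lam * x) ≤ (lam * x) * Real.cosh (lam * x) :=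
    auxRC_sinh_le_mul_cosh ha
  have h4 : (1 : ℝ) ≤ Real.cosh ((1 - lam) * x) := Real.one_le_cosh _
  have h5 : 0 ≤ Real.sinh (lam * x) := Real.sinh_nonneg_iff.mpr ha
  have h6 : (1 : ℝ) ≤ Real.cosh (lam * x) := Real.one_le_cosh _
  have hcA : (0:ℝ) ≤ Real.cosh (lam * x) := by linarith
  have t1 : lam * Real.sinh (lam * x) ≤ lam * (Real.sinh (lam * x) * Real.cosh ((1 - lam) * x)) := by
    have := mul_le_mul_of_nonneg_left h4 h5
    nlinarith
  have t2 : lam * (Real.cosh (lam * x) * ((1 - lam) * x)) ≤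
      lam * (Real.cosh (lam * x) * Real.sinh ((1 - lam) * x)) :=
    mul_le_mul_of_nonneg_left (mul_le_mul_of_nonneg_left h2 hcA) h0
  have t3 : (1 - lam) * Real.sinh (lam * x) ≤ (1 - lam) * (lam * x * Real.cosh (lam * x)) :=
    mul_le_mul_of_nonneg_left h3 (by linarith)
  rw [hadd]
  nlinarith [t1, t2, t3]

set_option maxHeartbeats 1000000 in
/-- Lemma 4.5, case κ = −1: the radial contraction of the annulus [R−δ, R] onto
[r−λδ, r] is almost bi-Lipschitz with ratio λ = sinh r / sinh R, measured via
sinh of half-distances through the half-angle hyperbolic cosine law. -/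
theorem radial_contraction_biLipschitz_hyperbolic
    (r R δ lam c : ℝ) (hr : 0 < r) (hrR : r < R)
    (hδ0 : 0 < δ) (hδ : δ < R / Real.cosh R)
    (hlam : lam = Real.sinh r / Real.sinh R)
    (hc : c = 1 - δ * Real.cosh R / R)
    (s t θ : ℝ) (hs : s ∈ Set.Icc (R - δ) R) (ht : t ∈ Set.Icc (R - δ) R)
    (hθ : θ ∈ Set.Icc 0 π) :
    c ^ 2 * lam ^ 2 *
        (Real.sinh ((s - t) / 2) ^ 2 + Real.sin (θ / 2) ^ 2 * Real.sinh s * Real.sinh t) ≤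
      Real.sinh (((r - lam * (R - s)) - (r - lam * (R - t))) / 2) ^ 2 +
        Real.sin (θ / 2) ^ 2 * Real.sinh (r - lam * (R - s)) * Real.sinh (r - lam * (R - t)) ∧
    Real.sinh (((r - lam * (R - s)) - (r - lam * (R - t))) / 2) ^ 2 +
        Real.sin (θ / 2) ^ 2 * Real.sinh (r - lam * (R - s)) * Real.sinh (r - lam * (R - t)) ≤
      c⁻¹ ^ 2 * lam ^ 2 *
        (Real.sinh ((s - t) / 2) ^ 2 + Real.sin (θ / 2) ^ 2 * Real.sinh s * Real.sinh t) := by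
  have hR : 0 < R := hr.trans hrR
  have hcoshR1 : (1 : ℝ) ≤ Real.cosh R := Real.one_le_cosh R
  have hcoshRpos : (0 : ℝ) < Real.cosh R := lt_of_lt_of_le one_pos hcoshR1
  have hδcosh : δ * Real.cosh R < R := by
    rwa [lt_div_iff₀ hcoshRpos] at hδ
  have hδR : δ < R := by nlinarith
  have hsinhRpos : 0 < Real.sinh R := Real.sinh_pos_iff.mpr hR
  have hsinhrpos : 0 < Real.sinh r := Real.sinh_pos_iff.mpr hr
  have hRle : R ≤ Real.sinh R := Real.self_le_sinh_iff.mpr hR.le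
  have hlamR : lam * Real.sinh R = Real.sinh r := by
    rw [hlam]; field_simp
  have hlam_pos : 0 < lam := by
    rw [hlam]; positivity
  have hlam_lt1 : lam < 1 := by
    rw [hlam, div_lt_one hsinhRpos]
    exact Real.sinh_lt_sinh.mpr hrR
  have hc_pos : 0 < c := by
    rw [hc]; rw [sub_pos, div_lt_one hR]; exact hδcosh
  have hc_le1 : c ≤ 1 := by
    rw [hc]
    have : (0:ℝ) ≤ δ * Real.cosh R / R := by positivity
    linarith
  have hcR : c * R = R - δ * Real.cosh R := by
    rw [hc]; field_simp
  have hcoshr_le : Real.cosh r ≤ Real.cosh R := by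
    rw [Real.cosh_le_cosh, abs_of_nonneg hr.le, abs_of_nonneg hR.le]
    exact hrR.le
  -- λδ < r
  have hsinhr_le : Real.sinh r ≤ r * Real.cosh r := auxRC_sinh_le_mul_cosh hr.le
  have hlamδ : lam * δ < r := by
    have h2 : Real.sinh r * δ < r * Real.sinh R := by
      have a1 : Real.sinh r * δ ≤ r * Real.cosh r * δ :=
        mul_le_mul_of_nonneg_right hsinhr_le hδ0.le
      have a2 : r * Real.cosh r * δ ≤ r * Real.cosh R * δ :=
        mul_le_mul_of_nonneg_right (mul_le_mul_of_nonneg_left hcoshr_le hr.le) hδ0.le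
      have a3 : r * (δ * Real.cosh R) < r * R := mul_lt_mul_of_pos_left hδcosh hr
      have a4 : r * R ≤ r * Real.sinh R := mul_le_mul_of_nonneg_left hRle hr.le
      linarith
    have h3 : lam * δ * Real.sinh R < r * Real.sinh R := by
      have e : lam * δ * Real.sinh R = Real.sinh r * δ := by
        calc lam * δ * Real.sinh R = lam * Real.sinh R * δ := by ring
          _ = Real.sinh r * δ := by rw [hlamR]
      rw [e]; exact h2
    exact lt_of_mul_lt_mul_right h3 hsinhRpos.le
  -- lower pointwise bound for the radial factor
  have h_lower : ∀ u : ℝ, u ∈ Set.Icc (R - δ) R →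
      c * (lam * Real.sinh u) ≤ Real.sinh (r - lam * (R - u)) := by
    intro u hu
    obtain ⟨hu1, hu2⟩ := hu
    have hRu : 0 ≤ R - u := by linarith
    have hRuδ : R - u ≤ δ := by linarith
    have hu'pos : 0 < r - lam * (R - u) := by
      have : lam * (R - u) ≤ lam * δ := mul_le_mul_of_nonneg_left hRuδ hlam_pos.le
      linarith
    have hle : r - lam * (R - u) ≤ r := by nlinarith [mul_nonneg hlam_pos.le hRu]
    have hA : Real.sinh r - Real.sinh (r - lam * (R - u)) ≤
        lam * (R - u) * Real.cosh r := by
      have := auxRC_sinh_sub_le hu'pos.le hle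
      calc Real.sinh r - Real.sinh (r - lam * (R - u))
          ≤ (r - (r - lam * (R - u))) * Real.cosh r := this
        _ = lam * (R - u) * Real.cosh r := by ring
    have hB : lam * Real.sinh u ≤ Real.sinh r := by
      rw [← hlamR]
      exact mul_le_mul_of_nonneg_left (Real.sinh_le_sinh.mpr hu2) hlam_pos.le
    -- key: lam * δ * cosh r * R ≤ δ * cosh R * sinh r
    have hD : lam * δ * Real.cosh r * R ≤ δ * Real.cosh R * Real.sinh r := by
      rw [← hlamR]
      have hkey : Real.cosh r * R ≤ Real.cosh R * Real.sinh R :=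
        mul_le_mul hcoshr_le hRle hR.le hcoshRpos.le
      have := mul_le_mul_of_nonneg_left hkey (mul_nonneg hlam_pos.le hδ0.le)
      linarith [this]
    have hsinhu_pos : 0 < Real.sinh u := Real.sinh_pos_iff.mpr (by linarith)
    have hcoshr_pos : (0:ℝ) < Real.cosh r := lt_of_lt_of_le one_pos (Real.one_le_cosh r)
    -- multiply everything by R
    have hmulR : c * (lam * Real.sinh u) * R ≤ Real.sinh (r - lam * (R - u)) * R := by
      have step1 : c * (lam * Real.sinh u) * R ≤ c * Real.sinh r * R := by
        have := mul_le_mul_of_nonneg_left hB (mul_nonneg hc_pos.le hR.le)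
        linarith [this]
      have step2 : c * Real.sinh r * R = Real.sinh r * (c * R) := by ring
      have step3 : Real.sinh r * (R - δ * Real.cosh R) ≤
          Real.sinh (r - lam * (R - u)) * R := by
        have m1 := mul_le_mul_of_nonneg_right hA hR.le
        have m2 := mul_le_mul_of_nonneg_right hRuδ
          (mul_nonneg (mul_nonneg hlam_pos.le hcoshr_pos.le) hR.le)
        linarith [m1, m2, hD]
      calc c * (lam * Real.sinh u) * R ≤ c * Real.sinh r * R := step1
        _ = Real.sinh r * (c * R) := step2
        _ = Real.sinh r * (R - δ * Real.cosh R) := by rw [hcR]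
        _ ≤ Real.sinh (r - lam * (R - u)) * R := step3
    exact le_of_mul_le_mul_right hmulR hR
  -- upper pointwise bound for the radial factor
  have h_upper : ∀ u : ℝ, u ∈ Set.Icc (R - δ) R →
      c * Real.sinh (r - lam * (R - u)) ≤ lam * Real.sinh u := by
    intro u hu
    obtain ⟨hu1, hu2⟩ := hu
    have hRu : 0 ≤ R - u := by linarith
    have hle : r - lam * (R - u) ≤ r := by nlinarith [mul_nonneg hlam_pos.le hRu]
    have hsinh_le : Real.sinh (r - lam * (R - u)) ≤ Real.sinh r :=
      Real.sinh_le_sinh.mpr hle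
    have hF : Real.sinh R - Real.sinh (R - δ) ≤ δ * Real.cosh R := by
      have := auxRC_sinh_sub_le (by linarith : (0:ℝ) ≤ R - δ) (by linarith : R - δ ≤ R)
      calc Real.sinh R - Real.sinh (R - δ) ≤ (R - (R - δ)) * Real.cosh R := this
        _ = δ * Real.cosh R := by ring
    have hsinhu_ge : Real.sinh (R - δ) ≤ Real.sinh u := Real.sinh_le_sinh.mpr hu1
    have hE : lam * R ≤ Real.sinh r := by
      rw [← hlamR]
      exact mul_le_mul_of_nonneg_left hRle hlam_pos.le
    -- multiply everything by R
    have hmulR : c * Real.sinh (r - lam * (R - u)) * R ≤ lam * Real.sinh u * R := by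
      have step1 : c * Real.sinh (r - lam * (R - u)) * R ≤ c * Real.sinh r * R :=
        mul_le_mul_of_nonneg_right
          (mul_le_mul_of_nonneg_left hsinh_le hc_pos.le) hR.le
      have step2 : c * Real.sinh r * R = Real.sinh r * (c * R) := by ring
      have step3 : Real.sinh r * (R - δ * Real.cosh R) ≤ lam * Real.sinh u * R := by
        have h1 : lam * R * (δ * Real.cosh R) ≤ Real.sinh r * (δ * Real.cosh R) :=
          mul_le_mul_of_nonneg_right hE (mul_nonneg hδ0.le hcoshRpos.le)
        have h2 : lam * (Real.sinh R - δ * Real.cosh R) ≤ lam * Real.sinh u := by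
          apply mul_le_mul_of_nonneg_left _ hlam_pos.le
          linarith
        have h2' := mul_le_mul_of_nonneg_right h2 hR.le
        have hlamRR : lam * Real.sinh R * R = Real.sinh r * R := by rw [hlamR]
        linarith [h1, h2', hlamRR]
      calc c * Real.sinh (r - lam * (R - u)) * R ≤ c * Real.sinh r * R := step1
        _ = Real.sinh r * (c * R) := step2
        _ = Real.sinh r * (R - δ * Real.cosh R) := by rw [hcR]
        _ ≤ lam * Real.sinh u * R := step3
    exact le_of_mul_le_mul_right hmulR hR
  -- c * cosh(δ/2) ≤ 1
  have hG : c * Real.cosh (δ / 2) ≤ 1 := by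
    have hdd : Real.cosh (δ / 2) = Real.cosh (δ / 4) ^ 2 + Real.sinh (δ / 4) ^ 2 := by
      have : Real.cosh (2 * (δ / 4)) = Real.cosh (δ / 4) ^ 2 + Real.sinh (δ / 4) ^ 2 :=
        Real.cosh_two_mul _
      have h24 : 2 * (δ / 4) = δ / 2 := by ring
      rwa [h24] at this
    have hsq4 : Real.cosh (δ / 4) ^ 2 = Real.sinh (δ / 4) ^ 2 + 1 := Real.cosh_sq _
    have hid : Real.cosh (δ / 2) = 2 * Real.sinh (δ / 4) ^ 2 + 1 := by
      rw [hdd, hsq4]; ring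
    have hq : Real.sinh (δ / 4) ≤ (δ / 4) * Real.cosh (δ / 4) :=
      auxRC_sinh_le_mul_cosh (by linarith)
    have hq2 : Real.cosh (δ / 4) ^ 2 ≤ Real.cosh (δ / 2) := by
      rw [hdd]; nlinarith [sq_nonneg (Real.sinh (δ / 4))]
    have hup : Real.cosh (δ / 2) - 1 ≤ δ ^ 2 * Real.cosh (δ / 2) / 8 := by
      have hsnn : 0 ≤ Real.sinh (δ / 4) := Real.sinh_nonneg_iff.mpr (by linarith)
      have : Real.sinh (δ / 4) ^ 2 ≤ (δ / 4) ^ 2 * Real.cosh (δ / 4) ^ 2 := by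
        nlinarith [mul_nonneg (by linarith : (0:ℝ) ≤ δ / 4)
          (le_of_lt (lt_of_lt_of_le one_pos (Real.one_le_cosh (δ / 4))))]
      nlinarith
    -- need (c * cosh(δ/2)) * R ≤ R
    have hcoshd1 : (1:ℝ) ≤ Real.cosh (δ / 2) := Real.one_le_cosh _
    have hRcosh : R ≤ Real.cosh R := hRle.trans (Real.sinh_lt_cosh R).le
    have hδR8 : δ * R ≤ 8 * Real.cosh R := by
      have m := mul_lt_mul_of_pos_right hδcosh hR
      nlinarith [m, hRcosh, mul_pos hδ0 hR]
    have key : c * Real.cosh (δ / 2) * R ≤ R := by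
      have hrw : c * Real.cosh (δ / 2) * R = Real.cosh (δ / 2) * (c * R) := by ring
      rw [hrw, hcR]
      have m1 := mul_le_mul_of_nonneg_right hup hR.le
      have m2 := mul_le_mul_of_nonneg_left hδR8
        (by positivity : (0:ℝ) ≤ δ * Real.cosh (δ / 2) / 8)
      linarith [m1, m2]
    have key' : c * Real.cosh (δ / 2) * R ≤ 1 * R := by linarith
    exact le_of_mul_le_mul_right key' hR
  -- difference term bounds (via absolute value)
  have hdiff : ∀ y : ℝ, |y| ≤ δ / 2 →
      c * lam * Real.sinh |y| ≤ Real.sinh (lam * |y|) ∧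
      Real.sinh (lam * |y|) ≤ lam * Real.sinh |y| := by
    intro y hy
    have ha : 0 ≤ |y| := abs_nonneg y
    constructor
    · have h1 : Real.sinh |y| ≤ |y| * Real.cosh |y| := auxRC_sinh_le_mul_cosh ha
      have h2 : Real.cosh |y| ≤ Real.cosh (δ / 2) := by
        rw [Real.cosh_le_cosh, abs_abs, abs_of_nonneg (by linarith : (0:ℝ) ≤ δ / 2)]
        exact hy
      have h3 : lam * |y| ≤ Real.sinh (lam * |y|) :=
        Real.self_le_sinh_iff.mpr (mul_nonneg hlam_pos.le ha)
      have p1 : Real.sinh |y| ≤ |y| * Real.cosh (δ / 2) := by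
        calc Real.sinh |y| ≤ |y| * Real.cosh |y| := h1
          _ ≤ |y| * Real.cosh (δ / 2) := mul_le_mul_of_nonneg_left h2 ha
      have p2 : c * lam * Real.sinh |y| ≤ c * lam * (|y| * Real.cosh (δ / 2)) :=
        mul_le_mul_of_nonneg_left p1 (mul_nonneg hc_pos.le hlam_pos.le)
      have p4 : c * Real.cosh (δ / 2) * (lam * |y|) ≤ 1 * (lam * |y|) :=
        mul_le_mul_of_nonneg_right hG (mul_nonneg hlam_pos.le ha)
      linarith [p2, p4, h3]
    · exact auxRC_sinh_mul_le hlam_pos.le hlam_lt1.le ha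
  -- now assemble
  obtain ⟨hs1, hs2⟩ := hs
  obtain ⟨ht1, ht2⟩ := ht
  set S := Real.sin (θ / 2) ^ 2 with hS
  have hSnn : 0 ≤ S := sq_nonneg _
  have harg : ((r - lam * (R - s)) - (r - lam * (R - t))) / 2 = lam * ((s - t) / 2) := by
    ring
  rw [harg]
  set y := (s - t) / 2 with hy
  have hyabs : |y| ≤ δ / 2 := by
    rw [hy, abs_div, abs_of_nonneg (by norm_num : (0:ℝ) ≤ (2:ℝ))]
    have : |s - t| ≤ δ := abs_sub_le_iff.mpr ⟨by linarith, by linarith⟩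
    linarith
  obtain ⟨hd_low, hd_up⟩ := hdiff y hyabs
  -- convert to squares
  have hsq_abs : Real.sinh y ^ 2 = Real.sinh |y| ^ 2 := by
    rw [← sq_abs (Real.sinh y), Real.abs_sinh]
  have hsq_abs2 : Real.sinh (lam * y) ^ 2 = Real.sinh (lam * |y|) ^ 2 := by
    rw [← sq_abs (Real.sinh (lam * y)), Real.abs_sinh, abs_mul,
      abs_of_nonneg hlam_pos.le]
  have hsinha_nn : 0 ≤ Real.sinh |y| := Real.sinh_nonneg_iff.mpr (abs_nonneg y)
  have hsinhla_nn : 0 ≤ Real.sinh (lam * |y|) :=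
    Real.sinh_nonneg_iff.mpr (mul_nonneg hlam_pos.le (abs_nonneg y))
  have hDlow : c ^ 2 * lam ^ 2 * Real.sinh y ^ 2 ≤ Real.sinh (lam * y) ^ 2 := by
    rw [hsq_abs, hsq_abs2]
    have := pow_le_pow_left₀ (mul_nonneg (mul_nonneg hc_pos.le hlam_pos.le) hsinha_nn)
      hd_low 2
    calc c ^ 2 * lam ^ 2 * Real.sinh |y| ^ 2 = (c * lam * Real.sinh |y|) ^ 2 := by ring
      _ ≤ Real.sinh (lam * |y|) ^ 2 := this
  have hcinv1 : (1:ℝ) ≤ c⁻¹ := (one_le_inv_iff₀).mpr ⟨hc_pos, hc_le1⟩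
  have hDup : Real.sinh (lam * y) ^ 2 ≤ c⁻¹ ^ 2 * lam ^ 2 * Real.sinh y ^ 2 := by
    rw [hsq_abs, hsq_abs2]
    have h1 : Real.sinh (lam * |y|) ≤ c⁻¹ * lam * Real.sinh |y| := by
      have : lam * Real.sinh |y| ≤ c⁻¹ * lam * Real.sinh |y| := by
        nlinarith [mul_nonneg hlam_pos.le hsinha_nn]
      linarith [hd_up]
    have := pow_le_pow_left₀ hsinhla_nn h1 2
    calc Real.sinh (lam * |y|) ^ 2 ≤ (c⁻¹ * lam * Real.sinh |y|) ^ 2 := this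
      _ = c⁻¹ ^ 2 * lam ^ 2 * Real.sinh |y| ^ 2 := by ring
  -- product bounds
  have hsinh_s_pos : 0 < Real.sinh s := Real.sinh_pos_iff.mpr (by linarith)
  have hsinh_t_pos : 0 < Real.sinh t := Real.sinh_pos_iff.mpr (by linarith)
  have hs'pos : 0 < r - lam * (R - s) := by
    have : lam * (R - s) ≤ lam * δ := mul_le_mul_of_nonneg_left (by linarith) hlam_pos.le
    linarith
  have ht'pos : 0 < r - lam * (R - t) := by
    have : lam * (R - t) ≤ lam * δ := mul_le_mul_of_nonneg_left (by linarith) hlam_pos.le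
    linarith
  have hsinh_s'_nn : 0 ≤ Real.sinh (r - lam * (R - s)) :=
    (Real.sinh_pos_iff.mpr hs'pos).le
  have hsinh_t'_nn : 0 ≤ Real.sinh (r - lam * (R - t)) :=
    (Real.sinh_pos_iff.mpr ht'pos).le
  have hls := h_lower s ⟨hs1, hs2⟩
  have hlt := h_lower t ⟨ht1, ht2⟩
  have hus := h_upper s ⟨hs1, hs2⟩
  have hut := h_upper t ⟨ht1, ht2⟩
  have hPlow : c ^ 2 * lam ^ 2 * (Real.sinh s * Real.sinh t) ≤
      Real.sinh (r - lam * (R - s)) * Real.sinh (r - lam * (R - t)) := by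
    have := mul_le_mul hls hlt
      (mul_nonneg hc_pos.le (mul_nonneg hlam_pos.le hsinh_t_pos.le)) hsinh_s'_nn
    calc c ^ 2 * lam ^ 2 * (Real.sinh s * Real.sinh t)
        = (c * (lam * Real.sinh s)) * (c * (lam * Real.sinh t)) := by ring
      _ ≤ _ := this
  have hPup : Real.sinh (r - lam * (R - s)) * Real.sinh (r - lam * (R - t)) ≤
      c⁻¹ ^ 2 * lam ^ 2 * (Real.sinh s * Real.sinh t) := by
    have h1 : Real.sinh (r - lam * (R - s)) ≤ c⁻¹ * (lam * Real.sinh s) := by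
      rw [le_inv_mul_iff₀ hc_pos] at *
      exact hus
    have h2 : Real.sinh (r - lam * (R - t)) ≤ c⁻¹ * (lam * Real.sinh t) := by
      rw [le_inv_mul_iff₀ hc_pos] at *
      exact hut
    have := mul_le_mul h1 h2 hsinh_t'_nn
      (mul_nonneg (by positivity) (mul_nonneg hlam_pos.le hsinh_s_pos.le))
    calc Real.sinh (r - lam * (R - s)) * Real.sinh (r - lam * (R - t))
        ≤ (c⁻¹ * (lam * Real.sinh s)) * (c⁻¹ * (lam * Real.sinh t)) := this
      _ = c⁻¹ ^ 2 * lam ^ 2 * (Real.sinh s * Real.sinh t) := by ring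
  constructor
  · have h1 := mul_le_mul_of_nonneg_left hPlow hSnn
    calc c ^ 2 * lam ^ 2 * (Real.sinh y ^ 2 + S * Real.sinh s * Real.sinh t)
        = c ^ 2 * lam ^ 2 * Real.sinh y ^ 2
          + S * (c ^ 2 * lam ^ 2 * (Real.sinh s * Real.sinh t)) := by ring
      _ ≤ Real.sinh (lam * y) ^ 2
          + S * (Real.sinh (r - lam * (R - s)) * Real.sinh (r - lam * (R - t))) :=
          add_le_add hDlow h1
      _ = Real.sinh (lam * y) ^ 2
          + S * Real.sinh (r - lam * (R - s)) * Real.sinh (r - lam * (R - t)) := by ring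
  · have h1 := mul_le_mul_of_nonneg_left hPup hSnn
    calc Real.sinh (lam * y) ^ 2
          + S * Real.sinh (r - lam * (R - s)) * Real.sinh (r - lam * (R - t))
        = Real.sinh (lam * y) ^ 2
          + S * (Real.sinh (r - lam * (R - s)) * Real.sinh (r - lam * (R - t))) := by ring
      _ ≤ c⁻¹ ^ 2 * lam ^ 2 * Real.sinh y ^ 2
          + S * (c⁻¹ ^ 2 * lam ^ 2 * (Real.sinh s * Real.sinh t)) := add_le_add hDup h1
      _ = c⁻¹ ^ 2 * lam ^ 2 * (Real.sinh y ^ 2 + S * Real.sinh s * Real.sinh t) := by ring
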